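/- Let S be a block matrix [[S11, S12],[S21, S22]] with ker S11 ⊆ ker S21. Then the diagram of linear maps ψ1(c1) = (c1, 0), φ1(c1,c2) = c2, ψ0(d1) = (d1, S21 S11⁺ d1), φ0(d1,d2) = d2 - S21 S11⁺ d1, together with boundary maps given by multiplication by S11, S, and S' = S22 - S21 S11⁺ S12, commutes: S ψ1(c1) = ψ0(S11 c1) for all c1, and φ0(S c) = S' φ1(c) for all c = (c1, c2). -/
import Mathlib


open Matrix

theorem stmt18_key {m1 m2 n1 : ℕ}
    (S11 : Matrix (Fin m1) (Fin n1) ℝ)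
    (S21 : Matrix (Fin m2) (Fin n1) ℝ)
    (S11p : Matrix (Fin n1) (Fin m1) ℝ)
    (hp1 : S11 * S11p * S11 = S11)
    (hker : ∀ c1 : Fin n1 → ℝ, S11 *ᵥ c1 = 0 → S21 *ᵥ c1 = 0) :
    S21 * S11p * S11 = S21 := by
  have hvec : ∀ c1 : Fin n1 → ℝ, (S21 * S11p * S11) *ᵥ c1 = S21 *ᵥ c1 := by
    intro c1
    have hm : S11 * (S11p * S11) = S11 := by rw [← Matrix.mul_assoc, hp1]
    have h0 : S11 *ᵥ ((S11p * S11) *ᵥ c1 - c1) = 0 := by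
      rw [Matrix.mulVec_sub, Matrix.mulVec_mulVec, hm, sub_self]
    have h1 := hker _ h0
    rw [Matrix.mulVec_sub, Matrix.mulVec_mulVec, sub_eq_zero] at h1
    rw [Matrix.mul_assoc]
    exact h1
  ext i j
  have := congrFun (hvec (Pi.single j 1)) i
  simpa using this

/-- With `ker S11 ⊆ ker S21`, the diagram of chain maps
`ψ1(c1) = (c1, 0)`, `φ1(c1,c2) = c2`, `ψ0(d1) = (d1, S21 S11⁺ d1)`,
`φ0(d1,d2) = d2 - S21 S11⁺ d1`, with boundary maps given by multiplication
by `S11`, `S` and `S' = S22 - S21 S11⁺ S12`, commutes: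
`S ψ1(c1) = ψ0(S11 c1)` for all `c1`, and `φ0(S c) = S' φ1(c)` for all
`c = (c1, c2)`. -/
theorem stmt18 {m1 m2 n1 n2 : ℕ}
    (S11 : Matrix (Fin m1) (Fin n1) ℝ) (S12 : Matrix (Fin m1) (Fin n2) ℝ)
    (S21 : Matrix (Fin m2) (Fin n1) ℝ) (S22 : Matrix (Fin m2) (Fin n2) ℝ)
    (S11p : Matrix (Fin n1) (Fin m1) ℝ)
    (hp1 : S11 * S11p * S11 = S11)
    (hp2 : S11p * S11 * S11p = S11p)
    (hp3 : (S11 * S11p)ᵀ = S11 * S11p)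
    (hp4 : (S11p * S11)ᵀ = S11p * S11)
    (hker : ∀ c1 : Fin n1 → ℝ, S11 *ᵥ c1 = 0 → S21 *ᵥ c1 = 0) :
    (∀ c1 : Fin n1 → ℝ,
      (Matrix.fromBlocks S11 S12 S21 S22) *ᵥ (Sum.elim c1 0) =
        Sum.elim (S11 *ᵥ c1) ((S21 * S11p) *ᵥ (S11 *ᵥ c1))) ∧
    (∀ c1 : Fin n1 → ℝ, ∀ c2 : Fin n2 → ℝ,
      (((Matrix.fromBlocks S11 S12 S21 S22) *ᵥ (Sum.elim c1 c2)) ∘ Sum.inr) -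
          (S21 * S11p) *ᵥ
            (((Matrix.fromBlocks S11 S12 S21 S22) *ᵥ (Sum.elim c1 c2)) ∘ Sum.inl) =
        (S22 - S21 * S11p * S12) *ᵥ c2) := by
  have hkey : S21 * S11p * S11 = S21 := stmt18_key S11 S21 S11p hp1 hker
  constructor
  · intro c1
    rw [Matrix.fromBlocks_mulVec, Matrix.mulVec_mulVec, hkey]
    simp [Sum.elim_comp_inl, Sum.elim_comp_inr, Matrix.mulVec_zero]
  · intro c1 c2
    rw [Matrix.fromBlocks_mulVec]
    simp only [Sum.elim_comp_inl, Sum.elim_comp_inr]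
    rw [Matrix.mulVec_add, Matrix.mulVec_mulVec, Matrix.mulVec_mulVec, hkey,
      Matrix.sub_mulVec]
    abel
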